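/- Let x* be a nondegenerate local minimizer of φ : M → ℝ, i.e., grad φ(x*) = 0 and every element of the Clarke generalized covariant derivative ∂grad φ(x*) is positive definite. Then there exist λ₁, λ₂ > 0 and δ > 0 such that for every x ∈ B_δ(x*) and every H ∈ ∂grad φ(x): λ₁ ≤ min_{‖ξ‖=1} ⟨ξ, Hξ⟩, ‖H‖ ≤ λ₂, and ‖H⁻¹‖ ≤ λ₁⁻¹. -/
import Mathlib


open scoped RealInnerProductSpace

lemma aux_inv {E : Type*} [NormedAddCommGroup E] [InnerProductSpace ℝ E]
    [FiniteDimensional ℝ E] (H : E →L[ℝ] E) (c : ℝ) (hc : 0 < c)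
    (hcoer : ∀ v : E, c * ‖v‖ ^ 2 ≤ ⟪v, H v⟫) :
    ∃ Hinv : E →L[ℝ] E, (∀ v, Hinv (H v) = v ∧ H (Hinv v) = v) ∧ ‖Hinv‖ ≤ c⁻¹ := by
  have hlow : ∀ v : E, c * ‖v‖ ≤ ‖H v‖ := by
    intro v
    rcases eq_or_ne v 0 with rfl | hv
    · simp
    have h1 : c * ‖v‖ ^ 2 ≤ ‖v‖ * ‖H v‖ :=
      (hcoer v).trans (real_inner_le_norm v (H v))
    have hv' : 0 < ‖v‖ := norm_pos_iff.mpr hv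
    nlinarith [hv', h1]
  have hinj : Function.Injective (H : E →ₗ[ℝ] E) := by
    intro a b hab
    have h0 : H (a - b) = 0 := by
      simp only [map_sub]; exact sub_eq_zero.mpr hab
    have h2 := hlow (a - b)
    rw [h0, norm_zero] at h2
    have h3 : ‖a - b‖ ≤ 0 := by
      by_contra h
      push_neg at h
      nlinarith
    have : a - b = 0 := norm_le_zero_iff.mp h3
    exact sub_eq_zero.mp this
  have hbij : Function.Bijective (H : E →ₗ[ℝ] E) :=
    ⟨hinj, (LinearMap.injective_iff_surjective).mp hinj⟩
  let e : E ≃ₗ[ℝ] E := LinearEquiv.ofBijective (H : E →ₗ[ℝ] E) hbij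
  let eC : E ≃L[ℝ] E := e.toContinuousLinearEquiv
  refine ⟨eC.symm.toContinuousLinearMap, fun v => ⟨?_, ?_⟩, ?_⟩
  · exact eC.symm_apply_apply v
  · exact eC.apply_symm_apply v
  · apply ContinuousLinearMap.opNorm_le_bound _ (by positivity)
    intro v
    have := hlow (eC.symm v)
    have hv : H (eC.symm v) = v := eC.apply_symm_apply v
    rw [hv] at this
    have h4 : ‖eC.symm v‖ ≤ ‖v‖ / c := (le_div_iff₀' hc).mpr this
    calc ‖eC.symm.toContinuousLinearMap v‖ = ‖eC.symm v‖ := rfl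
      _ ≤ ‖v‖ / c := h4
      _ = c⁻¹ * ‖v‖ := by ring

/-- uniform eigenvalue/norm bounds for the Clarke generalized covariant
derivative `Dgrad` near a nondegenerate local minimizer `xs` of `φ` (all elements of
`Dgrad xs` positive definite, `grad φ(xs) = 0`).  Tangent spaces are identified with
`E` via parallel transport, under which `Dgrad` is self-adjoint valued, nonempty and
compact at `xs`, and upper semicontinuous. -/
theorem stmt_7
    {E : Type*} [NormedAddCommGroup E] [InnerProductSpace ℝ E] [FiniteDimensional ℝ E]
    {M : Type*} [MetricSpace M]
    (grad : M → E) (Dgrad : M → Set (E →L[ℝ] E)) (xs : M)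
    (hgrad0 : grad xs = 0)
    (hne : (Dgrad xs).Nonempty)
    (hcompact : IsCompact (Dgrad xs))
    (hsym : ∀ x : M, ∀ H ∈ Dgrad x, ∀ u v : E, ⟪H u, v⟫ = ⟪u, H v⟫)
    (hposdef : ∀ H ∈ Dgrad xs, ∀ ξ : E, ξ ≠ 0 → 0 < ⟪ξ, H ξ⟫)
    (husc : ∀ ε > 0, ∃ δ > 0, ∀ x ∈ Metric.ball xs δ, ∀ H ∈ Dgrad x,
      ∃ H' ∈ Dgrad xs, ‖H - H'‖ ≤ ε) :
    ∃ lam₁ > (0:ℝ), ∃ lam₂ > (0:ℝ), ∃ δ > (0:ℝ),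
      ∀ x ∈ Metric.ball xs δ, ∀ H ∈ Dgrad x,
        (∀ ξ : E, ‖ξ‖ = 1 → lam₁ ≤ ⟪ξ, H ξ⟫) ∧ ‖H‖ ≤ lam₂ ∧
        ∃ Hinv : E →L[ℝ] E, (∀ v, Hinv (H v) = v ∧ H (Hinv v) = v) ∧
          ‖Hinv‖ ≤ lam₁⁻¹ := by
  rcases subsingleton_or_nontrivial E with hE | hE
  · -- trivial space
    refine ⟨1, one_pos, 1, one_pos, 1, one_pos, fun x _ H _ => ⟨?_, ?_, 0, ?_, ?_⟩⟩
    · intro ξ hξ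
      exact absurd hξ (by simp [Subsingleton.elim ξ 0])
    · have : H = 0 := Subsingleton.elim H 0
      simp [this]
    · intro v
      exact ⟨Subsingleton.elim _ _, Subsingleton.elim _ _⟩
    · simp
  · -- nontrivial space
    have hsph : (Metric.sphere (0:E) 1).Nonempty :=
      NormedSpace.sphere_nonempty.mpr zero_le_one
    have hKcpt : IsCompact ((Dgrad xs) ×ˢ Metric.sphere (0:E) 1) :=
      hcompact.prod (isCompact_sphere 0 1)
    have hKne : ((Dgrad xs) ×ˢ Metric.sphere (0:E) 1).Nonempty := hne.prod hsph
    have hfc : Continuous (fun p : (E →L[ℝ] E) × E => ⟪p.2, p.1 p.2⟫) := by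
      apply Continuous.inner continuous_snd
      exact isBoundedBilinearMap_apply.continuous.comp
        (continuous_fst.prodMk continuous_snd)
    obtain ⟨p, hpK, hpmin⟩ := hKcpt.exists_isMinOn hKne hfc.continuousOn
    set μ : ℝ := ⟪p.2, p.1 p.2⟫ with hμdef
    have hμpos : 0 < μ := by
      have h1 : p.1 ∈ Dgrad xs := hpK.1
      have h2 : ‖p.2‖ = 1 := mem_sphere_zero_iff_norm.mp hpK.2
      have h3 : p.2 ≠ 0 := by
        intro h; rw [h, norm_zero] at h2; norm_num at h2
      exact hposdef p.1 h1 p.2 h3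
    obtain ⟨r, hr⟩ := hcompact.isBounded.subset_closedBall 0
    have hr0 : 0 ≤ r := by
      obtain ⟨H₀, hH₀⟩ := hne
      have := hr hH₀
      simp only [Metric.mem_closedBall, dist_zero_right] at this
      exact le_trans (norm_nonneg _) this
    obtain ⟨δ, hδ, hδprop⟩ := husc (μ/2) (by positivity)
    refine ⟨μ/2, by positivity, r + μ/2, by positivity, δ, hδ, fun x hx H hH => ?_⟩
    obtain ⟨H', hH', hHH'⟩ := hδprop x hx H hH
    have hmin : ∀ ξ : E, ‖ξ‖ = 1 → μ ≤ ⟪ξ, H' ξ⟫ := by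
      intro ξ hξ
      have hmem : (H', ξ) ∈ (Dgrad xs) ×ˢ Metric.sphere (0:E) 1 :=
        ⟨hH', mem_sphere_zero_iff_norm.mpr hξ⟩
      exact hpmin hmem
    have claimA : ∀ ξ : E, ‖ξ‖ = 1 → μ/2 ≤ ⟪ξ, H ξ⟫ := by
      intro ξ hξ
      have hsplit : ⟪ξ, H ξ⟫ = ⟪ξ, H' ξ⟫ + ⟪ξ, H ξ - H' ξ⟫ := by
        rw [← inner_add_right]; congr 1; abel
      have hb : |⟪ξ, H ξ - H' ξ⟫| ≤ μ/2 := by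
        calc |⟪ξ, H ξ - H' ξ⟫| ≤ ‖ξ‖ * ‖H ξ - H' ξ‖ := abs_real_inner_le_norm _ _
          _ = ‖(H - H') ξ‖ := by simp [hξ]
          _ ≤ ‖H - H'‖ * ‖ξ‖ := (H - H').le_opNorm ξ
          _ = ‖H - H'‖ := by simp [hξ]
          _ ≤ μ/2 := hHH'
      have := hmin ξ hξ
      have := abs_le.mp hb
      linarith [hsplit, this.1]
    refine ⟨claimA, ?_, ?_⟩
    · -- norm bound
      have h1 : ‖H'‖ ≤ r := by
        have := hr hH'
        simpa [Metric.mem_closedBall, dist_zero_right] using this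
      calc ‖H‖ = ‖H' + (H - H')‖ := by congr 1; abel
        _ ≤ ‖H'‖ + ‖H - H'‖ := norm_add_le _ _
        _ ≤ r + μ/2 := add_le_add h1 hHH'
    · -- inverse
      apply aux_inv H (μ/2) (by positivity)
      intro v
      rcases eq_or_ne v 0 with rfl | hv
      · simp
      have hvn : 0 < ‖v‖ := norm_pos_iff.mpr hv
      set ξ : E := ‖v‖⁻¹ • v with hξdef
      have hξ1 : ‖ξ‖ = 1 := by
        rw [hξdef, norm_smul, norm_inv, norm_norm, inv_mul_cancel₀ hvn.ne']
      have hkey := claimA ξ hξ1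
      have hexp : ⟪ξ, H ξ⟫ = ‖v‖⁻¹ * (‖v‖⁻¹ * ⟪v, H v⟫) := by
        rw [hξdef, map_smul, real_inner_smul_left, real_inner_smul_right]
      rw [hexp] at hkey
      have h2 : μ/2 * ‖v‖ * ‖v‖ ≤ ⟪v, H v⟫ := by
        have h3 : ‖v‖ * ‖v‖ * (μ/2) ≤ ‖v‖ * ‖v‖ * (‖v‖⁻¹ * (‖v‖⁻¹ * ⟪v, H v⟫)) := by
          apply mul_le_mul_of_nonneg_left hkey (by positivity)
        have h4 : ‖v‖ * ‖v‖ * (‖v‖⁻¹ * (‖v‖⁻¹ * ⟪v, H v⟫)) = ⟪v, H v⟫ := by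
          field_simp
        linarith [h3, h4 ▸ h3]
      calc μ/2 * ‖v‖^2 = μ/2 * ‖v‖ * ‖v‖ := by ring
        _ ≤ ⟪v, H v⟫ := h2
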